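/- Suppose m and n are distinct odd integers with m, n ≥ 3, and that for all distinct x, y ∈ G the faces of the darts (x,y) and (y,x) are simple cycles, one of length m and the other of length n. Then the set of bijections σ : G → G with σ(0) = 0 that are automorphisms of the embedding (orientation-preserving or orientation-reversing) has cardinality at most mn. -/

import Mathlib

/-- The face-tracing map: it sends the dart `(x, y)` to `(y, y + ρ₀(x − y))`. -/
def faceMap {G : Type*} [AddCommGroup G] (ρ₀ : G → G) : G × G → G × G :=
  fun p => (p.2, p.2 + ρ₀ (p.1 - p.2))

/-- The face of the dart `p` (its orbit under the face-tracing map) is a simple cycle of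
length `k`: it consists of exactly `k` darts whose first components are pairwise distinct. -/
def IsSimpleCycleFace {G : Type*} [AddCommGroup G] (ρ₀ : G → G) (k : ℕ) (p : G × G) : Prop :=
  (faceMap ρ₀)^[k] p = p ∧
    ∀ i < k, ∀ j < k, ((faceMap ρ₀)^[i] p).1 = ((faceMap ρ₀)^[j] p).1 → i = j

namespace CMAux

variable {G : Type*} [AddCommGroup G] {ρ₀ : Equiv.Perm G}

lemma inv_zero (hρ0 : ρ₀ 0 = 0) : ρ₀⁻¹ (0:G) = 0 := by
  conv_lhs => rw [← hρ0]
  exact ρ₀.symm_apply_apply 0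

lemma map_ne_zero (hρ0 : ρ₀ 0 = 0) {z : G} (hz : z ≠ 0) : ρ₀ z ≠ 0 := by
  intro h
  exact hz (ρ₀.injective (h.trans hρ0.symm))

lemma dart_step (hρ0 : ρ₀ 0 = 0) {p : G × G} (hp : p.1 ≠ p.2) :
    (faceMap ⇑ρ₀ p).1 ≠ (faceMap ⇑ρ₀ p).2 := by
  simp only [faceMap]
  intro h
  have : ρ₀ (p.1 - p.2) = 0 := (left_eq_add.mp h)
  exact map_ne_zero hρ0 (sub_ne_zero.mpr hp) this

lemma dart_iter (hρ0 : ρ₀ 0 = 0) {p : G × G} (hp : p.1 ≠ p.2) (i : ℕ) :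
    ((faceMap ⇑ρ₀)^[i] p).1 ≠ ((faceMap ⇑ρ₀)^[i] p).2 := by
  induction i with
  | zero => exact hp
  | succ i ih =>
    rw [Function.iterate_succ_apply']
    exact dart_step hρ0 ih

lemma d_succ (p : G × G) (i : ℕ) :
    ((faceMap ⇑ρ₀)^[i+1] p).1 = ((faceMap ⇑ρ₀)^[i] p).2 := by
  rw [Function.iterate_succ_apply']
  rfl

lemma face_rec (p : G × G) (i : ℕ) :
    ((faceMap ⇑ρ₀)^[i+2] p).1 = ((faceMap ⇑ρ₀)^[i+1] p).1
      + ρ₀ (((faceMap ⇑ρ₀)^[i] p).1 - ((faceMap ⇑ρ₀)^[i+1] p).1) := by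
  rw [d_succ p (i+1), d_succ p i]
  rw [Function.iterate_succ_apply' _ i]
  rfl

lemma iter_mul {p : G × G} {k : ℕ} (hk : (faceMap ⇑ρ₀)^[k] p = p) (i : ℕ) :
    (faceMap ⇑ρ₀)^[i*k] p = p := by
  induction i with
  | zero => simp
  | succ i ih =>
    rw [Nat.succ_mul, Function.iterate_add_apply, hk, ih]

lemma d_add_mul {p : G × G} {k : ℕ} (hk : (faceMap ⇑ρ₀)^[k] p = p) (j i : ℕ) :
    ((faceMap ⇑ρ₀)^[j + i*k] p).1 = ((faceMap ⇑ρ₀)^[j] p).1 := by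
  rw [Function.iterate_add_apply, iter_mul hk]

lemma d_mod {p : G × G} {k : ℕ} (hk : (faceMap ⇑ρ₀)^[k] p = p) (j : ℕ) :
    ((faceMap ⇑ρ₀)^[j] p).1 = ((faceMap ⇑ρ₀)^[j % k] p).1 := by
  conv_lhs => rw [← Nat.mod_add_div' j k]
  rw [d_add_mul hk]

lemma scf_dvd {p : G × G} {k : ℕ} (h : IsSimpleCycleFace ⇑ρ₀ k p) (hk0 : 0 < k)
    {r : ℕ} (hr : (faceMap ⇑ρ₀)^[r] p = p) : k ∣ r := by
  have h1 : ((faceMap ⇑ρ₀)^[r % k] p).1 = ((faceMap ⇑ρ₀)^[0] p).1 := by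
    rw [← d_mod h.1 r, hr]
    rfl
  have := h.2 (r % k) (Nat.mod_lt _ hk0) 0 hk0 h1
  exact Nat.dvd_of_mod_eq_zero this

lemma scf_unique {m n : ℕ} (hm : 0 < m) (hn : 0 < n) (hmn : m ≠ n) {p : G × G}
    (h1 : IsSimpleCycleFace ⇑ρ₀ m p) (h2 : IsSimpleCycleFace ⇑ρ₀ n p) : False := by
  exact hmn (Nat.dvd_antisymm (scf_dvd h1 hm h2.1) (scf_dvd h2 hn h1.1))

lemma scf_iterate {p : G × G} {k : ℕ} (h : IsSimpleCycleFace ⇑ρ₀ k p) (hk0 : 0 < k) (t : ℕ) :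
    IsSimpleCycleFace ⇑ρ₀ k ((faceMap ⇑ρ₀)^[t] p) := by
  constructor
  · rw [← Function.iterate_add_apply, Nat.add_comm, Function.iterate_add_apply, h.1]
  · intro i hi j hj hij
    rw [← Function.iterate_add_apply, ← Function.iterate_add_apply] at hij
    rw [d_mod h.1 (i+t), d_mod h.1 (j+t)] at hij
    have := h.2 _ (Nat.mod_lt _ hk0) _ (Nat.mod_lt _ hk0) hij
    have h3 : i ≡ j [MOD k] := Nat.ModEq.add_right_cancel' t this
    have : i % k = j % k := h3
    rw [Nat.mod_eq_of_lt hi, Nat.mod_eq_of_lt hj] at this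
    exact this


lemma mod_inj {l : ℕ} (hl : 1 ≤ l) {i j : ℕ} (hi : i < l) (hj : j < l)
    (h : (1 + i*(l-1)) % l = (1 + j*(l-1)) % l) : i = j := by
  have e1 : 1 + i*(l-1) + (i + j) = (1 + j) + i*l := by
    have : i*(l-1) + i = i * l := by
      rw [← Nat.mul_succ]
      congr 1
      omega
    omega
  have e2 : 1 + j*(l-1) + (i + j) = (1 + i) + j*l := by
    have : j*(l-1) + j = j * l := by
      rw [← Nat.mul_succ]
      congr 1
      omega
    omega
  have h2 : ((1 + j) + i*l) % l = ((1 + i) + j*l) % l := by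
    rw [← e1, ← e2]
    exact Nat.ModEq.add_right (i+j) h
  rw [Nat.add_mul_mod_self_right, Nat.add_mul_mod_self_right] at h2
  rcases Nat.lt_or_ge (1+i) l with h3 | h3
  · rcases Nat.lt_or_ge (1+j) l with h4 | h4
    · rw [Nat.mod_eq_of_lt h3, Nat.mod_eq_of_lt h4] at h2
      omega
    · have h5 : 1 + j = l := by omega
      rw [h5, Nat.mod_self, Nat.mod_eq_of_lt h3] at h2
      omega
  · have h5 : 1 + i = l := by omega
    rcases Nat.lt_or_ge (1+j) l with h4 | h4
    · rw [h5, Nat.mod_self, Nat.mod_eq_of_lt h4] at h2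
      omega
    · omega

section Pres

variable {σ : G → G}

lemma pres_rho (hρ0 : ρ₀ 0 = 0) (hσ0 : σ 0 = 0)
    (hpres : ∀ x y : G, x ≠ y → σ (x + ρ₀ (y - x)) = σ x + ρ₀ (σ y - σ x)) (y : G) :
    σ (ρ₀ y) = ρ₀ (σ y) := by
  by_cases hy : y = 0
  · rw [hy, hρ0, hσ0, hρ0]
  · have := hpres 0 y (Ne.symm hy)
    simpa [hσ0] using this

lemma pres_pow (hρ0 : ρ₀ 0 = 0) (hσ0 : σ 0 = 0)
    (hpres : ∀ x y : G, x ≠ y → σ (x + ρ₀ (y - x)) = σ x + ρ₀ (σ y - σ x)) (k : ℕ) (y : G) :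
    σ ((ρ₀ ^ k) y) = (ρ₀ ^ k) (σ y) := by
  induction k generalizing y with
  | zero => simp
  | succ k ih =>
    rw [pow_succ' ρ₀ k, Equiv.Perm.mul_apply, pres_rho hρ0 hσ0 hpres ((ρ₀ ^ k) y), ih y,
      Equiv.Perm.mul_apply]

lemma pres_iterate (hρ0 : ρ₀ 0 = 0)
    (hpres : ∀ x y : G, x ≠ y → σ (x + ρ₀ (y - x)) = σ x + ρ₀ (σ y - σ x))
    {p : G × G} (hp : p.1 ≠ p.2) (i : ℕ) :
    (faceMap ⇑ρ₀)^[i] (σ p.1, σ p.2)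
      = (σ (((faceMap ⇑ρ₀)^[i] p).1), σ (((faceMap ⇑ρ₀)^[i] p).2)) := by
  induction i with
  | zero => rfl
  | succ i ih =>
    rw [Function.iterate_succ_apply', Function.iterate_succ_apply', ih]
    have hd : ((faceMap ⇑ρ₀)^[i] p).2 ≠ ((faceMap ⇑ρ₀)^[i] p).1 :=
      (dart_iter hρ0 hp i).symm
    have := hpres _ _ hd
    simp only [faceMap]
    rw [← this]

lemma scf_pres_image (hρ0 : ρ₀ 0 = 0) (hσinj : Function.Injective σ)
    (hpres : ∀ x y : G, x ≠ y → σ (x + ρ₀ (y - x)) = σ x + ρ₀ (σ y - σ x))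
    {p : G × G} (hp : p.1 ≠ p.2) {k : ℕ} (h : IsSimpleCycleFace ⇑ρ₀ k p) :
    IsSimpleCycleFace ⇑ρ₀ k (σ p.1, σ p.2) := by
  constructor
  · rw [pres_iterate hρ0 hpres hp, h.1]
  · intro i hi j hj hij
    rw [pres_iterate hρ0 hpres hp, pres_iterate hρ0 hpres hp] at hij
    exact h.2 i hi j hj (hσinj hij)

end Pres

section Rev

variable {σ : G → G}

lemma rev_rho (hρ0 : ρ₀ 0 = 0) (hσ0 : σ 0 = 0)
    (hrev : ∀ x y : G, x ≠ y → σ (x + ρ₀ (y - x)) = σ x + ρ₀⁻¹ (σ y - σ x)) (y : G) :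
    σ (ρ₀ y) = ρ₀⁻¹ (σ y) := by
  by_cases hy : y = 0
  · rw [hy, hρ0, hσ0, inv_zero hρ0]
  · have := hrev 0 y (Ne.symm hy)
    simpa [hσ0] using this

lemma rev_rho' (hρ0 : ρ₀ 0 = 0) (hσ0 : σ 0 = 0)
    (hrev : ∀ x y : G, x ≠ y → σ (x + ρ₀ (y - x)) = σ x + ρ₀⁻¹ (σ y - σ x)) (y : G) :
    σ (ρ₀⁻¹ y) = ρ₀ (σ y) := by
  have := rev_rho hρ0 hσ0 hrev (ρ₀⁻¹ y)
  rw [show ρ₀ (ρ₀⁻¹ y) = y from ρ₀.apply_symm_apply y] at this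
  rw [this, show ρ₀ (ρ₀⁻¹ (σ (ρ₀⁻¹ y))) = σ (ρ₀⁻¹ y) from ρ₀.apply_symm_apply _]

lemma rev_pow (hρ0 : ρ₀ 0 = 0) (hσ0 : σ 0 = 0)
    (hrev : ∀ x y : G, x ≠ y → σ (x + ρ₀ (y - x)) = σ x + ρ₀⁻¹ (σ y - σ x)) (k : ℕ) (y : G) :
    σ ((ρ₀ ^ k) y) = ((ρ₀⁻¹) ^ k) (σ y) := by
  induction k generalizing y with
  | zero => simp
  | succ k ih =>
    rw [pow_succ' ρ₀ k, Equiv.Perm.mul_apply, rev_rho hρ0 hσ0 hrev ((ρ₀ ^ k) y), ih y,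
      pow_succ' ρ₀⁻¹ k, Equiv.Perm.mul_apply]

lemma rev_pow' (hρ0 : ρ₀ 0 = 0) (hσ0 : σ 0 = 0)
    (hrev : ∀ x y : G, x ≠ y → σ (x + ρ₀ (y - x)) = σ x + ρ₀⁻¹ (σ y - σ x)) (k : ℕ) (y : G) :
    σ (((ρ₀⁻¹) ^ k) y) = (ρ₀ ^ k) (σ y) := by
  induction k generalizing y with
  | zero => simp
  | succ k ih =>
    rw [pow_succ' ρ₀⁻¹ k, Equiv.Perm.mul_apply, rev_rho' hρ0 hσ0 hrev ((ρ₀⁻¹ ^ k) y), ih y,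
      pow_succ' ρ₀ k, Equiv.Perm.mul_apply]

/-- key reversing-sequence lemma: the face of the dart `(σ d₁, σ d₀)` traverses the
σ-image of the face of `p` backwards. -/
lemma L1 (hρ0 : ρ₀ 0 = 0)
    (hrev : ∀ x y : G, x ≠ y → σ (x + ρ₀ (y - x)) = σ x + ρ₀⁻¹ (σ y - σ x))
    {p : G × G} (hp : p.1 ≠ p.2) {l : ℕ} (hl : 1 ≤ l)
    (hper : (faceMap ⇑ρ₀)^[l] p = p) (j : ℕ) :
    (faceMap ⇑ρ₀)^[j] (σ p.2, σ p.1)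
      = (σ (((faceMap ⇑ρ₀)^[1 + j*(l-1)] p).1),
         σ (((faceMap ⇑ρ₀)^[1 + (j+1)*(l-1)] p).1)) := by
  -- rev step
  have R' : ∀ i : ℕ, σ (((faceMap ⇑ρ₀)^[i] p).1)
      = σ (((faceMap ⇑ρ₀)^[i+1] p).1)
        + ρ₀ (σ (((faceMap ⇑ρ₀)^[i+2] p).1) - σ (((faceMap ⇑ρ₀)^[i+1] p).1)) := by
    intro i
    have hd : ((faceMap ⇑ρ₀)^[i+1] p).1 ≠ ((faceMap ⇑ρ₀)^[i] p).1 := by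
      rw [d_succ]
      exact (dart_iter hρ0 hp i).symm
    have hstep := hrev _ _ hd
    rw [← face_rec p i] at hstep
    have : ρ₀ (σ (((faceMap ⇑ρ₀)^[i+2] p).1) - σ (((faceMap ⇑ρ₀)^[i+1] p).1))
        = σ (((faceMap ⇑ρ₀)^[i] p).1) - σ (((faceMap ⇑ρ₀)^[i+1] p).1) := by
      rw [hstep]
      rw [add_sub_cancel_left]
      exact ρ₀.apply_symm_apply _
    rw [this]
    abel
  induction j with
  | zero =>
    have h1 : ((faceMap ⇑ρ₀)^[1 + 1*(l-1)] p).1 = p.1 := by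
      have : 1 + 1*(l-1) = l := by omega
      rw [this, hper]
    have h0 : ((faceMap ⇑ρ₀)^[1 + 0*(l-1)] p).1 = p.2 := by
      norm_num
      exact d_succ p 0
    rw [Function.iterate_zero_apply]
    rw [h0, h1]
  | succ j ih =>
    rw [Function.iterate_succ_apply', ih]
    have key : σ (((faceMap ⇑ρ₀)^[1 + (j+1)*(l-1)] p).1)
        + ρ₀ (σ (((faceMap ⇑ρ₀)^[1 + j*(l-1)] p).1)
            - σ (((faceMap ⇑ρ₀)^[1 + (j+1)*(l-1)] p).1))
        = σ (((faceMap ⇑ρ₀)^[1 + (j+2)*(l-1)] p).1) := by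
      have e1 : (1 + (j+2)*(l-1)) + 1 = (1 + (j+1)*(l-1)) + l := by
        have : (j+2)*(l-1) = (j+1)*(l-1) + (l-1) := by ring
        omega
      have e2 : (1 + (j+2)*(l-1)) + 2 = (1 + j*(l-1)) + 2*l := by
        have : (j+2)*(l-1) = j*(l-1) + 2*(l-1) := by ring
        omega
      have hA : ((faceMap ⇑ρ₀)^[(1 + (j+2)*(l-1)) + 1] p).1
          = ((faceMap ⇑ρ₀)^[1 + (j+1)*(l-1)] p).1 := by
        rw [e1]
        have := d_add_mul (ρ₀ := ρ₀) hper (1 + (j+1)*(l-1)) 1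
        simpa using this
      have hB : ((faceMap ⇑ρ₀)^[(1 + (j+2)*(l-1)) + 2] p).1
          = ((faceMap ⇑ρ₀)^[1 + j*(l-1)] p).1 := by
        rw [e2]
        have := d_add_mul (ρ₀ := ρ₀) hper (1 + j*(l-1)) 2
        simpa [two_mul, Nat.mul_comm] using this
      have := R' (1 + (j+2)*(l-1))
      rw [hA, hB] at this
      exact this.symm
    simp only [faceMap]
    rw [key]

end Rev


section NoRev

variable [Fintype G] {σ : G → G}

/-- A reversing automorphism fixing a nonzero point leads to a contradiction. -/
lemma fixed_case (hρ0 : ρ₀ 0 = 0) (hσinj : Function.Injective σ) (hσ0 : σ 0 = 0)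
    (hrev : ∀ x y : G, x ≠ y → σ (x + ρ₀ (y - x)) = σ x + ρ₀⁻¹ (σ y - σ x))
    {b : G} (hb : b ≠ 0) (hσb : σ b = b)
    {l l' : ℕ} (hl : 3 ≤ l) (hl' : 3 ≤ l') (hne : l ≠ l')
    (hSCF : IsSimpleCycleFace ⇑ρ₀ l ((0:G), b))
    (hSCF' : IsSimpleCycleFace ⇑ρ₀ l' (b, (0:G))) : False := by
  have hp : ((0:G), b).1 ≠ ((0:G), b).2 := Ne.symm hb
  have hper := hSCF.1
  have hW : ∀ j, ((faceMap ⇑ρ₀)^[j] (b, (0:G))).1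
      = σ (((faceMap ⇑ρ₀)^[1 + j*(l-1)] ((0:G), b)).1) := by
    intro j
    have h5 := L1 hρ0 hrev hp (by omega) hper j
    simp only [Prod.fst, Prod.snd] at h5
    rw [hσb, hσ0] at h5
    exact congrArg Prod.fst h5
  have hWinj : ∀ i < l, ∀ j < l,
      ((faceMap ⇑ρ₀)^[i] (b, (0:G))).1 = ((faceMap ⇑ρ₀)^[j] (b, (0:G))).1 → i = j := by
    intro i hi j hj hij
    rw [hW, hW] at hij
    have h6 := hσinj hij
    rw [d_mod hper (1+i*(l-1)), d_mod hper (1+j*(l-1))] at h6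
    have h7 := hSCF.2 _ (Nat.mod_lt _ (by omega)) _ (Nat.mod_lt _ (by omega)) h6
    exact mod_inj (by omega) hi hj h7
  have hWper : ∀ j, ((faceMap ⇑ρ₀)^[j + l] (b, (0:G))).1
      = ((faceMap ⇑ρ₀)^[j] (b, (0:G))).1 := by
    intro j
    rw [hW, hW]
    have h3 : 1 + (j+l)*(l-1) = (1 + j*(l-1)) + (l-1)*l := by
      rw [Nat.add_mul, Nat.mul_comm l (l-1), Nat.add_assoc]
    rw [h3, d_add_mul hper]
  have hWl' : ((faceMap ⇑ρ₀)^[l'] (b, (0:G))).1 = ((faceMap ⇑ρ₀)^[0] (b, (0:G))).1 := by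
    rw [hSCF'.1]
    rfl
  rcases Nat.lt_or_ge l' l with h | h
  · have := hWinj l' h 0 (by omega) hWl'
    omega
  · have hll' : l < l' := by omega
    have hWl : ((faceMap ⇑ρ₀)^[l] (b, (0:G))).1 = ((faceMap ⇑ρ₀)^[0] (b, (0:G))).1 := by
      have := hWper 0
      simpa using this
    have := hSCF'.2 l hll' 0 (by omega) hWl
    omega



lemma no_rev {m n : ℕ} (hm : 3 ≤ m) (hn : 3 ≤ n) (hmo : Odd m) (hno : Odd n) (hmn : m ≠ n)
    (hcard : Fintype.card G = 2 * m * n + 1)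
    (hρ0 : ρ₀ 0 = 0)
    (hcyc : ∀ a b : G, a ≠ 0 → b ≠ 0 → ∃ k : ℕ, (ρ₀ ^ k) a = b)
    (hfaces : ∀ x y : G, x ≠ y →
      (IsSimpleCycleFace ⇑ρ₀ m (x, y) ∧ IsSimpleCycleFace ⇑ρ₀ n (y, x)) ∨
      (IsSimpleCycleFace ⇑ρ₀ n (x, y) ∧ IsSimpleCycleFace ⇑ρ₀ m (y, x)))
    (hbij : Function.Bijective σ) (hσ0 : σ 0 = 0)
    (hrev : ∀ x y : G, x ≠ y → σ (x + ρ₀ (y - x)) = σ x + ρ₀⁻¹ (σ y - σ x)) : False := by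
  classical
  have hσinj := hbij.1
  have hσne : ∀ z : G, z ≠ 0 → σ z ≠ 0 := by
    intro z hz h
    exact hz (hσinj (h.trans hσ0.symm))
  -- a nonzero element exists
  have hnt : 1 < Fintype.card G := by
    rw [hcard]; nlinarith
  haveI : Nontrivial G := Fintype.one_lt_card_iff_nontrivial.mp hnt
  obtain ⟨a₀, ha₀⟩ := exists_ne (0 : G)
  -- σ is an involution
  have hinv : ∀ z : G, σ (σ z) = z := by
    intro z
    by_cases hz : z = 0
    · rw [hz, hσ0, hσ0]
    · obtain ⟨k, hk⟩ := hcyc a₀ z ha₀ hz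
      obtain ⟨s, hs⟩ := hcyc a₀ (σ a₀) ha₀ (hσne a₀ ha₀)
      have h1 : σ (σ a₀) = a₀ := by
        conv_lhs => rw [← hs]
        rw [rev_pow hρ0 hσ0 hrev, ← hs, inv_pow]
        exact Equiv.symm_apply_apply _ _
      rw [← hk, rev_pow hρ0 hσ0 hrev, rev_pow' hρ0 hσ0 hrev, h1]
  by_cases hfix : ∃ b : G, b ≠ 0 ∧ σ b = b
  · obtain ⟨b, hb, hσb⟩ := hfix
    rcases hfaces 0 b (Ne.symm hb) with ⟨h1, h2⟩ | ⟨h1, h2⟩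
    · exact fixed_case hρ0 hσinj hσ0 hrev hb hσb hm hn hmn h1 h2
    · exact fixed_case hρ0 hσinj hσ0 hrev hb hσb hn hm (Ne.symm hmn) h1 h2
  · push_neg at hfix
    -- no nonzero fixed points
    have hxσ : ∀ x : G, x ≠ 0 → (x, σ x).1 ≠ (x, σ x).2 := by
      intro x hx h
      exact hfix x hx h.symm
    set L : G → ℕ := fun x => if IsSimpleCycleFace ⇑ρ₀ m (x, σ x) then m else n with hLdef
    have hLfacts : ∀ x : G, x ≠ 0 →
        IsSimpleCycleFace ⇑ρ₀ (L x) (x, σ x) ∧ 3 ≤ L x ∧ Odd (L x) ∧ (L x = m ∨ L x = n) := by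
      intro x hx
      by_cases hSm : IsSimpleCycleFace ⇑ρ₀ m (x, σ x)
      · simp only [hLdef, if_pos hSm]
        refine ⟨hSm, hm, hmo, ?_⟩
        simp
      · simp only [hLdef, if_neg hSm]
        rcases hfaces x (σ x) (hxσ x hx) with ⟨h1, _⟩ | ⟨h1, _⟩
        · exact absurd h1 hSm
        · refine ⟨h1, hn, hno, ?_⟩
          simp
    set I : G → ℕ := fun x => (L x + 1)/2 with hIdef
    have keyD : ∀ x : G, x ≠ 0 → ∀ j, ((faceMap ⇑ρ₀)^[j] (x, σ x)).1
        = σ (((faceMap ⇑ρ₀)^[1 + j*(L x - 1)] (x, σ x)).1) := by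
      intro x hx j
      have h5 := L1 hρ0 hrev (hxσ x hx) (by have := (hLfacts x hx).2.1; omega)
        (hLfacts x hx).1.1 j
      simp only [Prod.fst, Prod.snd] at h5
      rw [hinv x] at h5
      exact congrArg Prod.fst h5
    have key1 : ∀ x : G, x ≠ 0 → ((faceMap ⇑ρ₀)^[I x] (x, σ x)).1 = 0 := by
      intro x hx
      obtain ⟨c, hc⟩ := (hLfacts x hx).2.2.1
      have hI : I x = c + 1 := by simp only [hIdef]; omega
      have hidx : 1 + (I x)*(L x - 1) = (I x) + (I x - 1)*(L x) := by
        rw [hI, hc]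
        simp only [Nat.add_sub_cancel]
        ring
      have h6 := keyD x hx (I x)
      rw [hidx, d_add_mul (hLfacts x hx).1.1] at h6
      by_contra h7
      exact hfix _ h7 h6.symm
    have key2 : ∀ x : G, x ≠ 0 →
        σ (((faceMap ⇑ρ₀)^[I x - 1] (x, σ x)).1) = ((faceMap ⇑ρ₀)^[I x + 1] (x, σ x)).1 := by
      intro x hx
      obtain ⟨c, hc⟩ := (hLfacts x hx).2.2.1
      have hI : I x = c + 1 := by simp only [hIdef]; omega
      have hidx : 1 + (I x + 1)*(L x - 1) = (I x - 1) + (I x)*(L x) := by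
        rw [hI, hc]
        simp only [Nat.add_sub_cancel]
        ring
      have h6 := keyD x hx (I x + 1)
      rw [hidx, d_add_mul (hLfacts x hx).1.1] at h6
      exact h6.symm
    -- the map Ψ
    have hΨne : ∀ x : G, x ≠ 0 → ((faceMap ⇑ρ₀)^[I x] (x, σ x)).2 ≠ 0 := by
      intro x hx h
      have h8 := dart_iter hρ0 (hxσ x hx) (I x)
      rw [key1 x hx, h] at h8
      exact h8 rfl
    set Ψ : {x : G // x ≠ 0} → {x : G // x ≠ 0} :=
      fun x => ⟨((faceMap ⇑ρ₀)^[I x.1] (x.1, σ x.1)).2, hΨne x.1 x.2⟩ with hΨdef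
    have hΨinj : Function.Injective Ψ := by
      rintro ⟨x, hx⟩ ⟨y, hy⟩ hxy
      simp only [hΨdef, Subtype.mk.injEq] at hxy
      have e1 : (faceMap ⇑ρ₀)^[I x] (x, σ x)
          = ((0:G), ((faceMap ⇑ρ₀)^[I x] (x, σ x)).2) := Prod.ext (key1 x hx) rfl
      have e2 : (faceMap ⇑ρ₀)^[I y] (y, σ y)
          = ((0:G), ((faceMap ⇑ρ₀)^[I x] (x, σ x)).2) := by
        rw [hxy]
        exact Prod.ext (key1 y hy) rfl
      have s1 : IsSimpleCycleFace ⇑ρ₀ (L x) ((0:G), ((faceMap ⇑ρ₀)^[I x] (x, σ x)).2) := by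
        rw [← e1]
        exact scf_iterate (hLfacts x hx).1 (by have := (hLfacts x hx).2.1; omega) _
      have s2 : IsSimpleCycleFace ⇑ρ₀ (L y) ((0:G), ((faceMap ⇑ρ₀)^[I x] (x, σ x)).2) := by
        rw [← e2]
        exact scf_iterate (hLfacts y hy).1 (by have := (hLfacts y hy).2.1; omega) _
      have hLeq : L x = L y := by
        rcases (hLfacts x hx).2.2.2 with h | h <;> rcases (hLfacts y hy).2.2.2 with h' | h'
        · rw [h, h']
        · exact absurd (scf_unique (by omega) (by omega) hmn (h ▸ s1) (h' ▸ s2)) not_false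
        · exact absurd (scf_unique (by omega) (by omega) (Ne.symm hmn) (h ▸ s1) (h' ▸ s2)) not_false
        · rw [h, h']
      have hIeq : I x = I y := by simp only [hIdef, hLeq]
      have hIle : I x ≤ L x := by
        have := (hLfacts x hx).2.1
        simp only [hIdef]
        omega
      have t1 : (faceMap ⇑ρ₀)^[L x - I x] ((0:G), ((faceMap ⇑ρ₀)^[I x] (x, σ x)).2)
          = (x, σ x) := by
        rw [← e1, ← Function.iterate_add_apply]
        rw [show L x - I x + I x = L x by omega]
        exact (hLfacts x hx).1.1
      have t2 : (faceMap ⇑ρ₀)^[L x - I x] ((0:G), ((faceMap ⇑ρ₀)^[I x] (x, σ x)).2)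
          = (y, σ y) := by
        rw [← e2, ← Function.iterate_add_apply]
        rw [hLeq, hIeq, show L y - I y + I y = L y by
          have := (hLfacts y hy).2.1
          simp only [hIdef]
          omega]
        exact (hLfacts y hy).1.1
      have : (x, σ x) = (y, σ y) := t1.symm.trans t2
      exact Subtype.ext (congrArg Prod.fst this)
    have hΨsurj : Function.Surjective Ψ := Finite.surjective_of_injective hΨinj
    -- conclude σ = ρ₀ on nonzero elements
    have hfinal : ∀ c : G, c ≠ 0 → σ c = ρ₀ c := by
      intro c hc
      have hrc : ρ₀ c ≠ 0 := map_ne_zero hρ0 hc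
      obtain ⟨⟨x, hx⟩, hx2⟩ := hΨsurj ⟨ρ₀ c, hrc⟩
      have hx3 : ((faceMap ⇑ρ₀)^[I x] (x, σ x)).2 = ρ₀ c := congrArg Subtype.val hx2
      have hI1 : 1 ≤ I x := by
        have := (hLfacts x hx).2.1
        simp only [hIdef]
        omega
      have hq2 : ((faceMap ⇑ρ₀)^[I x - 1] (x, σ x)).2 = 0 := by
        have h9 := d_succ (ρ₀ := ρ₀) (x, σ x) (I x - 1)
        rw [show I x - 1 + 1 = I x by omega] at h9
        rw [← h9]
        exact key1 x hx
      have e4 : (faceMap ⇑ρ₀)^[I x] (x, σ x)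
          = faceMap ⇑ρ₀ ((faceMap ⇑ρ₀)^[I x - 1] (x, σ x)) := by
        conv_lhs => rw [show I x = (I x - 1) + 1 by omega]
        rw [Function.iterate_succ_apply']
      have e5 : faceMap ⇑ρ₀ ((faceMap ⇑ρ₀)^[I x - 1] (x, σ x))
          = ((0:G), ρ₀ (((faceMap ⇑ρ₀)^[I x - 1] (x, σ x)).1)) := by
        simp only [faceMap, hq2, zero_add, sub_zero]
      have e6 : ρ₀ (((faceMap ⇑ρ₀)^[I x - 1] (x, σ x)).1) = ρ₀ c := by
        have h14 := congrArg Prod.snd (e4.trans e5)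
        exact h14.symm.trans hx3
      have e7 : ((faceMap ⇑ρ₀)^[I x - 1] (x, σ x)).1 = c := ρ₀.injective e6
      have h10 := key2 x hx
      rw [e7] at h10
      rw [d_succ (ρ₀ := ρ₀) (x, σ x) (I x)] at h10
      rw [hx3] at h10
      exact h10
    -- contradiction with the reversing relation
    have hρ2 : ρ₀ (ρ₀ a₀) = a₀ := by
      have h11 := rev_rho hρ0 hσ0 hrev a₀
      rw [hfinal (ρ₀ a₀) (map_ne_zero hρ0 ha₀), hfinal a₀ ha₀] at h11
      rw [show ρ₀⁻¹ (ρ₀ a₀) = a₀ from ρ₀.symm_apply_apply a₀] at h11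
      exact h11
    have hpow : ∀ k : ℕ, (ρ₀ ^ k) a₀ = a₀ ∨ (ρ₀ ^ k) a₀ = ρ₀ a₀ := by
      intro k
      induction k with
      | zero => exact Or.inl rfl
      | succ k ih =>
        rw [pow_succ' ρ₀ k, Equiv.Perm.mul_apply]
        rcases ih with h | h
        · rw [h]; exact Or.inr rfl
        · rw [h, hρ2]; exact Or.inl rfl
    have hsub : {x : G | x ≠ 0} ⊆ {a₀, ρ₀ a₀} := by
      intro z hz
      obtain ⟨k, hk⟩ := hcyc a₀ z ha₀ hz
      rcases hpow k with h | h <;> rw [hk] at h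
      · exact Or.inl h
      · exact Or.inr h
    have hcard1 : ({x : G | x ≠ 0}).ncard ≤ 2 := by
      calc ({x : G | x ≠ 0}).ncard ≤ ({a₀, ρ₀ a₀} : Set G).ncard :=
            Set.ncard_le_ncard hsub (Set.toFinite _)
        _ ≤ 2 := by
            apply (Set.ncard_insert_le _ _).trans
            simp [Set.ncard_singleton]
    have hcard2 : 2 * m * n ≤ ({x : G | x ≠ 0}).ncard := by
      have huniv : (Set.univ : Set G) = insert 0 {x : G | x ≠ 0} := by
        ext z
        by_cases hz : z = 0 <;> simp [hz]
      have h12 : (Set.univ : Set G).ncard = 2 * m * n + 1 := by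
        rw [Set.ncard_univ, Nat.card_eq_fintype_card, hcard]
      have h13 := Set.ncard_insert_le (0:G) {x : G | x ≠ 0}
      rw [← huniv, h12] at h13
      omega
    nlinarith [hcard1, hcard2, hm, hn]

end NoRev

end CMAux

open CMAux

/-- Suppose `m` and `n` are distinct odd integers with `m, n ≥ 3`, `G` is a
finite abelian group of order `2mn+1`, `ρ₀` is a permutation of `G` fixing `0` acting as a single
cycle of length `2mn` on `G \ {0}`, and for all distinct `x, y ∈ G` the faces of the darts
`(x,y)` and `(y,x)` are simple cycles, one of length `m` and the other of length `n`.  Then the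
set of bijections `σ : G → G` with `σ(0) = 0` that are automorphisms of the embedding
(orientation-preserving or orientation-reversing) has cardinality at most `mn`. -/
theorem automorphisms_fixing_zero_card_le
    (m n : ℕ) (hm : 3 ≤ m) (hn : 3 ≤ n) (hmo : Odd m) (hno : Odd n) (hmn : m ≠ n)
    (G : Type*) [AddCommGroup G] [Fintype G] (hcard : Fintype.card G = 2 * m * n + 1)
    (ρ₀ : Equiv.Perm G) (hρ0 : ρ₀ 0 = 0)
    (hcyc : ∀ a b : G, a ≠ 0 → b ≠ 0 → ∃ k : ℕ, (ρ₀ ^ k) a = b)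
    (hfaces : ∀ x y : G, x ≠ y →
      (IsSimpleCycleFace ⇑ρ₀ m (x, y) ∧ IsSimpleCycleFace ⇑ρ₀ n (y, x)) ∨
      (IsSimpleCycleFace ⇑ρ₀ n (x, y) ∧ IsSimpleCycleFace ⇑ρ₀ m (y, x))) :
    {σ : G → G | Function.Bijective σ ∧ σ 0 = 0 ∧
      ((∀ x y : G, x ≠ y → σ (x + ρ₀ (y - x)) = σ x + ρ₀ (σ y - σ x)) ∨
       (∀ x y : G, x ≠ y → σ (x + ρ₀ (y - x)) = σ x + ρ₀⁻¹ (σ y - σ x)))}.ncard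
      ≤ m * n := by
  classical
  set A : Set (G → G) := {σ : G → G | Function.Bijective σ ∧ σ 0 = 0 ∧
      ((∀ x y : G, x ≠ y → σ (x + ρ₀ (y - x)) = σ x + ρ₀ (σ y - σ x)) ∨
       (∀ x y : G, x ≠ y → σ (x + ρ₀ (y - x)) = σ x + ρ₀⁻¹ (σ y - σ x)))} with hA
  have hnt : 1 < Fintype.card G := by
    rw [hcard]; nlinarith
  haveI : Nontrivial G := Fintype.one_lt_card_iff_nontrivial.mp hnt
  obtain ⟨a₀, ha₀⟩ := exists_ne (0 : G)
  have hU : ∀ p : G × G, IsSimpleCycleFace ⇑ρ₀ m p → IsSimpleCycleFace ⇑ρ₀ n p → False :=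
    fun p h1 h2 => scf_unique (by omega) (by omega) hmn h1 h2
  set Fm : Set G := {x : G | x ≠ 0 ∧ IsSimpleCycleFace ⇑ρ₀ m ((0:G), x)} with hFm
  set Fn : Set G := {x : G | x ≠ 0 ∧ IsSimpleCycleFace ⇑ρ₀ n ((0:G), x)} with hFn
  have hcover : ∀ x : G, x ≠ 0 → x ∈ Fm ∨ x ∈ Fn := by
    intro x hx
    rcases hfaces 0 x (Ne.symm hx) with ⟨h1, _⟩ | ⟨h1, _⟩
    · exact Or.inl ⟨hx, h1⟩
    · exact Or.inr ⟨hx, h1⟩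
  have hmapsm : ∀ x ∈ Fm, ρ₀ x ∈ Fn := by
    rintro x ⟨hx0, hS⟩
    rcases hfaces 0 x (Ne.symm hx0) with ⟨_, h2⟩ | ⟨h1', _⟩
    · have h3 := scf_iterate h2 (by omega) 1
      rw [Function.iterate_one] at h3
      have h4 : faceMap ⇑ρ₀ (x, (0:G)) = ((0:G), ρ₀ x) := by
        simp [faceMap]
      rw [h4] at h3
      exact ⟨map_ne_zero hρ0 hx0, h3⟩
    · exact absurd (hU _ hS h1') not_false
  have hmapsn : ∀ x ∈ Fn, ρ₀ x ∈ Fm := by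
    rintro x ⟨hx0, hS⟩
    rcases hfaces 0 x (Ne.symm hx0) with ⟨h1', _⟩ | ⟨_, h2⟩
    · exact absurd (hU _ h1' hS) not_false
    · have h3 := scf_iterate h2 (by omega) 1
      rw [Function.iterate_one] at h3
      have h4 : faceMap ⇑ρ₀ (x, (0:G)) = ((0:G), ρ₀ x) := by
        simp [faceMap]
      rw [h4] at h3
      exact ⟨map_ne_zero hρ0 hx0, h3⟩
  have hdisj : Disjoint Fm Fn := by
    rw [Set.disjoint_left]
    rintro x ⟨_, h1⟩ ⟨_, h2⟩
    exact hU _ h1 h2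
  have hunion : Fm ∪ Fn = {x : G | x ≠ 0} := by
    ext x
    constructor
    · rintro (⟨h, _⟩ | ⟨h, _⟩) <;> exact h
    · intro hx
      exact hcover x hx
  have hcardnz : ({x : G | x ≠ 0} : Set G).ncard = 2 * m * n := by
    have huniv : (Set.univ : Set G) = insert 0 {x : G | x ≠ 0} := by
      ext z
      by_cases hz : z = 0 <;> simp [hz]
    have h12 : (Set.univ : Set G).ncard = 2 * m * n + 1 := by
      rw [Set.ncard_univ, Nat.card_eq_fintype_card, hcard]
    have h13 : (insert (0:G) {x : G | x ≠ 0}).ncard = ({x : G | x ≠ 0} : Set G).ncard + 1 :=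
      Set.ncard_insert_of_notMem (by simp) (Set.toFinite _)
    rw [← huniv, h12] at h13
    omega
  have hsum : Fm.ncard + Fn.ncard = 2 * m * n := by
    rw [← Set.ncard_union_eq hdisj (Set.toFinite _) (Set.toFinite _), hunion, hcardnz]
  have h1 : Fm.ncard ≤ Fn.ncard := by
    calc Fm.ncard = (⇑ρ₀ '' Fm).ncard := (Set.ncard_image_of_injective _ ρ₀.injective).symm
      _ ≤ Fn.ncard := Set.ncard_le_ncard
          (by rintro _ ⟨x, hx, rfl⟩; exact hmapsm x hx) (Set.toFinite _)
  have h2 : Fn.ncard ≤ Fm.ncard := by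
    calc Fn.ncard = (⇑ρ₀ '' Fn).ncard := (Set.ncard_image_of_injective _ ρ₀.injective).symm
      _ ≤ Fm.ncard := Set.ncard_le_ncard
          (by rintro _ ⟨x, hx, rfl⟩; exact hmapsn x hx) (Set.toFinite _)
  have hsum' : Fm.ncard + Fn.ncard = m * n + m * n := by
    rw [hsum]; ring
  have hFmle : Fm.ncard ≤ m * n := by omega
  have hFnle : Fn.ncard ≤ m * n := by omega
  -- every element of A is orientation-preserving
  have hApres : ∀ σ ∈ A, Function.Bijective σ ∧ σ 0 = 0 ∧
      (∀ x y : G, x ≠ y → σ (x + ρ₀ (y - x)) = σ x + ρ₀ (σ y - σ x)) := by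
    intro σ hσ
    obtain ⟨hb, h0, hor⟩ := hσ
    rcases hor with hpres | hrev
    · exact ⟨hb, h0, hpres⟩
    · exact absurd (no_rev hm hn hmo hno hmn hcard hρ0 hcyc hfaces hb h0 hrev) not_false
  have hinj : Set.InjOn (fun σ : G → G => σ a₀) A := by
    intro σ hσ τ hτ h
    obtain ⟨hbσ, h0σ, hpσ⟩ := hApres σ hσ
    obtain ⟨hbτ, h0τ, hpτ⟩ := hApres τ hτ
    have h' : σ a₀ = τ a₀ := h
    funext z
    by_cases hz : z = 0
    · rw [hz, h0σ, h0τ]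
    · obtain ⟨k, hk⟩ := hcyc a₀ z ha₀ hz
      rw [← hk, pres_pow hρ0 h0σ hpσ, pres_pow hρ0 h0τ hpτ, h']
  have hmain : ∀ (F : Set G) (l : ℕ), 3 ≤ l →
      a₀ ∈ {x : G | x ≠ 0 ∧ IsSimpleCycleFace ⇑ρ₀ l ((0:G), x)} →
      ({x : G | x ≠ 0 ∧ IsSimpleCycleFace ⇑ρ₀ l ((0:G), x)} : Set G).ncard ≤ m * n →
      A.ncard ≤ m * n := by
    intro F l hl hmem hle
    have himg : (fun σ : G → G => σ a₀) '' A
        ⊆ {x : G | x ≠ 0 ∧ IsSimpleCycleFace ⇑ρ₀ l ((0:G), x)} := by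
      rintro _ ⟨σ, hσA, rfl⟩
      obtain ⟨hbσ, h0σ, hpσ⟩ := hApres σ hσA
      have hne : σ a₀ ≠ 0 := by
        intro h
        exact ha₀ (hbσ.1 (h.trans h0σ.symm))
      have h5 := scf_pres_image hρ0 hbσ.1 hpσ
        (show ((0:G), a₀).1 ≠ ((0:G), a₀).2 from Ne.symm ha₀) hmem.2
      rw [h0σ] at h5
      exact ⟨hne, h5⟩
    calc A.ncard = ((fun σ : G → G => σ a₀) '' A).ncard :=
          (Set.ncard_image_of_injOn hinj).symm
      _ ≤ _ := Set.ncard_le_ncard himg (Set.toFinite _)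
      _ ≤ m * n := hle
  rcases hcover a₀ ha₀ with hmem | hmem
  · exact hmain Fm m hm hmem hFmle
  · exact hmain Fn n hn hmem hFnle
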